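/- For every real s > 4, with W₁⁰(s) = (1/2)(1 - √(1 - 4/s)), t = s√(1 - 4/s), h, α₁, κ real with κ > 0, the function W₁¹(s) = (α₁/(2√κ))(1/t - 1/s) - h/t² satisfies 0 = 2 W₁⁰(s) W₁¹(s) + h (d/ds) W₁⁰(s) + (α₁/(√κ s)) W₁⁰(s) - W₁¹(s). -/

import Mathlib

theorem stmt_4 (h α₁ κ : ℝ) (hκ : κ > 0) (s : ℝ) (hs : s > 4)
    (W₀ W₁ : ℝ → ℝ)
    (hW₀ : ∀ x > (4:ℝ), W₀ x = (1 / 2) * (1 - Real.sqrt (1 - 4 / x)))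
    (hW₁ : ∀ x > (4:ℝ), W₁ x =
      (α₁ / (2 * Real.sqrt κ)) * (1 / (x * Real.sqrt (1 - 4 / x)) - 1 / x)
        - h / (x * Real.sqrt (1 - 4 / x)) ^ 2) :
    0 = 2 * W₀ s * W₁ s + h * deriv W₀ s + (α₁ / (Real.sqrt κ * s)) * W₀ s - W₁ s := by
  have hs0 : (0:ℝ) < s := by linarith
  have hu : (0:ℝ) < 1 - 4 / s := by
    rw [sub_pos, div_lt_one hs0]; linarith
  set r := Real.sqrt (1 - 4 / s) with hrdef
  have hr : 0 < r := Real.sqrt_pos.mpr hu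
  have hκ' : 0 < Real.sqrt κ := Real.sqrt_pos.mpr hκ
  have hderiv : deriv W₀ s = -1 / (s ^ 2 * r) := by
    have hev : W₀ =ᶠ[nhds s] fun x => (1 / 2) * (1 - Real.sqrt (1 - 4 / x)) := by
      filter_upwards [eventually_gt_nhds hs] with x hx using hW₀ x hx
    rw [hev.deriv_eq]
    have h1 : HasDerivAt (fun x : ℝ => 1 - 4 / x) (4 / s ^ 2) s := by
      have := ((hasDerivAt_inv hs0.ne').const_mul (4:ℝ)).const_sub 1
      exact this.congr_deriv (by ring)
    have h2 : HasDerivAt (fun x : ℝ => Real.sqrt (1 - 4 / x)) (4 / s ^ 2 / (2 * r)) s :=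
      h1.sqrt hu.ne'
    have h3 := (h2.const_sub 1).const_mul ((1:ℝ) / 2)
    rw [h3.deriv]
    field_simp
    ring
  rw [hW₀ s hs, hW₁ s hs, hderiv, ← hrdef]
  field_simp
  ring
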